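/- Let n be a natural number, let E = EuclideanSpace ℝ (Fin n), and let P : E → ℝ≥0 be a submetry, where ℝ≥0 carries the metric dist a b = |a − b|. Set L = P ⁻¹' {0}. Then: (i) for every x ∈ E, (P x : ℝ) = Metric.infDist x L, i.e. P is the distance function to its zero fiber; (ii) the function x ↦ (P x : ℝ) is convex on E (ConvexOn ℝ Set.univ); and (iii) the set L is convex (Convex ℝ L). -/

import Mathlib

open Metric


/-- A map `P : X → Y` between metric spaces is a submetry if it maps every open
ball onto the open ball of the same radius around the image of the center. -/
def IsSubmetry {X Y : Type*} [MetricSpace X] [MetricSpace Y] (P : X → Y) : Prop :=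
  ∀ (x : X) (r : ℝ), 0 < r → P '' Metric.ball x r = Metric.ball (P x) r

/-- A submetry from a Euclidean space to `ℝ≥0` is the distance function to its zero
fiber; it is convex, and its zero fiber is a convex set. -/
theorem submetry_to_nnreal_structure (n : ℕ) (P : EuclideanSpace ℝ (Fin n) → NNReal)
    (hP : IsSubmetry P) (L : Set (EuclideanSpace ℝ (Fin n))) (hL : L = P ⁻¹' {0}) :
    (∀ x, (P x : ℝ) = Metric.infDist x L) ∧
      ConvexOn ℝ Set.univ (fun x => (P x : ℝ)) ∧ Convex ℝ L := by
  have hd0 : ∀ a : NNReal, dist a 0 = (a : ℝ) := by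
    intro a; rw [NNReal.dist_eq]; simp
  -- P is 1-Lipschitz
  have hLip : ∀ x y : EuclideanSpace ℝ (Fin n), dist (P x) (P y) ≤ dist x y := by
    intro x y
    refine le_of_forall_gt_imp_ge_of_dense fun r hr => ?_
    have h0 : (0 : ℝ) < r := lt_of_le_of_lt dist_nonneg hr
    have hy : P y ∈ P '' Metric.ball x r :=
      Set.mem_image_of_mem P (by simpa [Metric.mem_ball, dist_comm] using hr)
    rw [hP x r h0] at hy
    exact le_of_lt (by simpa [Metric.mem_ball, dist_comm] using hy)
  -- lifting property
  have hLift : ∀ (x) (b : NNReal) (r : ℝ), dist (P x) b < r →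
      ∃ y, P y = b ∧ dist x y < r := by
    intro x b r h
    have h0 : (0 : ℝ) < r := lt_of_le_of_lt dist_nonneg h
    have hb : b ∈ P '' Metric.ball x r := by
      rw [hP x r h0]; simpa [Metric.mem_ball, dist_comm] using h
    obtain ⟨y, hy, hyb⟩ := hb
    exact ⟨y, hyb, by simpa [Metric.mem_ball, dist_comm] using hy⟩
  -- each point has a nearby point of L
  have hnear : ∀ (x : EuclideanSpace ℝ (Fin n)) (ε : ℝ), 0 < ε →
      ∃ z ∈ L, dist x z < (P x : ℝ) + ε := by
    intro x ε hε
    obtain ⟨z, hz0, hzd⟩ := hLift x 0 ((P x : ℝ) + ε)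
      (by rw [hd0]; linarith [(P x).coe_nonneg])
    exact ⟨z, by simp [hL, hz0], hzd⟩
  obtain ⟨z0, hz0, -⟩ := hnear 0 1 one_pos
  have hne : L.Nonempty := ⟨z0, hz0⟩
  -- lower bound on distances to L
  have hlow : ∀ (x z : EuclideanSpace ℝ (Fin n)), z ∈ L → (P x : ℝ) ≤ dist x z := by
    intro x z hz
    have hz' : P z = 0 := by simpa [hL] using hz
    have := hLip x z
    rwa [hz', hd0] at this
  -- part (i)
  have hinf : ∀ x, (P x : ℝ) = Metric.infDist x L := by
    intro x
    refine le_antisymm ?_ ?_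
    · by_contra hlt
      obtain ⟨z, hz, hzd⟩ := (infDist_lt_iff hne).1 (not_le.1 hlt)
      exact absurd (hlow x z hz) (not_le.2 hzd)
    · refine le_of_forall_pos_le_add fun ε hε => ?_
      obtain ⟨z, hz, hzd⟩ := hnear x ε hε
      exact (infDist_le_dist_of_mem hz).trans hzd.le
  -- part (iii): L is convex
  have hconv : Convex ℝ L := by
    intro a ha b hb s t hs ht hst
    obtain rfl : s = 1 - t := by linarith
    set x := (1 - t) • a + t • b with hx
    suffices hPx : (P x : ℝ) = 0 by
      rw [hL]; show P x = 0; exact_mod_cast hPx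
    by_contra hdne
    have hd : 0 < (P x : ℝ) := lt_of_le_of_ne (P x).coe_nonneg (Ne.symm hdne)
    set d : ℝ := (P x : ℝ) with hdd
    set K : ℝ := (1 - t) * t * ‖b - a‖ ^ 2 with hKdef
    have hK : 0 ≤ K := by positivity
    set m : ℝ := K / d + 1 with hmdef
    have hm : 0 < m := by positivity
    have hdm : d * m = K + d := by
      rw [hmdef, mul_add, mul_one, mul_div_assoc', mul_comm d K, mul_div_assoc, div_self hd.ne', mul_one]
    obtain ⟨y, hPy, hxy⟩ := hLift x (P x + Real.toNNReal m) (m + d / 2) (by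
      rw [NNReal.dist_eq]
      push_cast [Real.coe_toNNReal m hm.le]
      rw [abs_of_nonpos (by linarith)]
      linarith)
    have hPyR : (P y : ℝ) = d + m := by
      rw [hPy]; push_cast [Real.coe_toNNReal m hm.le]; ring
    have hya : d + m ≤ dist y a := hPyR ▸ hlow y a ha
    have hyb : d + m ≤ dist y b := hPyR ▸ hlow y b hb
    -- Euclidean identity
    have hya' : y - a = (y - x) + t • (b - a) := by rw [hx]; module
    have hyb' : y - b = (y - x) - (1 - t) • (b - a) := by rw [hx]; module
    have e1 : ‖y - a‖ ^ 2 = ‖y - x‖ ^ 2 + 2 * (t * inner ℝ (y - x) (b - a)) +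
        t ^ 2 * ‖b - a‖ ^ 2 := by
      rw [hya', norm_add_sq_real, real_inner_smul_right, norm_smul, Real.norm_eq_abs,
        abs_of_nonneg ht, mul_pow]
    have e2 : ‖y - b‖ ^ 2 = ‖y - x‖ ^ 2 - 2 * ((1 - t) * inner ℝ (y - x) (b - a)) +
        (1 - t) ^ 2 * ‖b - a‖ ^ 2 := by
      rw [hyb', norm_sub_sq_real, real_inner_smul_right, norm_smul, Real.norm_eq_abs,
        abs_of_nonneg hs, mul_pow]
    have key : (1 - t) * ‖y - a‖ ^ 2 + t * ‖y - b‖ ^ 2 = ‖y - x‖ ^ 2 + K := by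
      rw [e1, e2, hKdef]; ring
    have hyadist : dist y a = ‖y - a‖ := dist_eq_norm y a
    have hybdist : dist y b = ‖y - b‖ := dist_eq_norm y b
    have hyx : ‖y - x‖ < m + d / 2 := by
      rw [← dist_eq_norm, dist_comm]; exact hxy
    have hyx0 : (0 : ℝ) ≤ ‖y - x‖ := norm_nonneg _
    rw [hyadist] at hya
    rw [hybdist] at hyb
    have hdm0 : (0 : ℝ) ≤ d + m := by linarith
    have h1 : (d + m) ^ 2 ≤ ‖y - a‖ ^ 2 := pow_le_pow_left₀ hdm0 hya 2
    have h2 : (d + m) ^ 2 ≤ ‖y - b‖ ^ 2 := pow_le_pow_left₀ hdm0 hyb 2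
    have hsum : (d + m) ^ 2 ≤ ‖y - x‖ ^ 2 + K := by
      rw [← key]
      nlinarith [mul_le_mul_of_nonneg_left h1 hs, mul_le_mul_of_nonneg_left h2 ht]
    have h5 : ‖y - x‖ ^ 2 ≤ (m + d / 2) ^ 2 := pow_le_pow_left₀ hyx0 hyx.le 2
    clear_value d K m
    have h6 : (d + m) ^ 2 ≤ (m + d / 2) ^ 2 + K := by linarith
    linarith [hdm, hd, sq_nonneg d]
  -- part (ii)
  have hconvOn : ConvexOn ℝ Set.univ (fun x => (P x : ℝ)) := by
    refine ⟨convex_univ, fun p _ q _ s t hs ht hst => ?_⟩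
    simp only [smul_eq_mul]
    rw [hinf, hinf, hinf]
    refine le_of_forall_pos_le_add fun ε hε => ?_
    obtain ⟨zp, hzp, hzpd⟩ := (infDist_lt_iff hne).1
      (by linarith : infDist p L < infDist p L + ε)
    obtain ⟨zq, hzq, hzqd⟩ := (infDist_lt_iff hne).1
      (by linarith : infDist q L < infDist q L + ε)
    have hz : s • zp + t • zq ∈ L := hconv hzp hzq hs ht hst
    have hdle : dist (s • p + t • q) (s • zp + t • zq) ≤ s * dist p zp + t * dist q zq := by
      rw [dist_eq_norm, dist_eq_norm, dist_eq_norm]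
      calc ‖s • p + t • q - (s • zp + t • zq)‖ = ‖s • (p - zp) + t • (q - zq)‖ := by
            congr 1; module
        _ ≤ ‖s • (p - zp)‖ + ‖t • (q - zq)‖ := norm_add_le _ _
        _ = s * ‖p - zp‖ + t * ‖q - zq‖ := by
            rw [norm_smul, norm_smul, Real.norm_eq_abs, Real.norm_eq_abs,
              abs_of_nonneg hs, abs_of_nonneg ht]
    have := (infDist_le_dist_of_mem hz).trans hdle
    have hip : 0 ≤ infDist p L := infDist_nonneg
    have hiq : 0 ≤ infDist q L := infDist_nonneg
    nlinarith [mul_le_mul_of_nonneg_left hzpd.le hs, mul_le_mul_of_nonneg_left hzqd.le ht]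
  exact ⟨hinf, hconvOn, hconv⟩
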